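/- Let m ≥ 1 and let q : F_2^{2m} → F_2 be the quadratic bent function q(x) = ∑_{k<m} x_k x_{m+k}. For b, c, b', c' ∈ F_2^{2m} define f(x) := q(x+b) + ⟨c,x⟩ + q(b) and g(x) := q(x+b') + ⟨c',x⟩ + q(b'). Then f(0) = g(0) = 0, and the Cayley graphs Cay(f) and Cay(g) are isomorphic if and only if wt(f) = wt(g). In other words, the extended translation class of q contains exactly two extended Cayley equivalence classes, corresponding to the two possible weight classes. -/

import Mathlib

open Finset

/-- Inner product on `F_2^n`. -/
def dotp {n : ℕ} (x y : Fin n → ZMod 2) : ZMod 2 := ∑ i, x i * y i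

/-- Hamming weight of a Boolean function: the cardinality of its support. -/
def wt {n : ℕ} (f : (Fin n → ZMod 2) → ZMod 2) : ℕ :=
  (Finset.univ.filter fun x => f x = 1).card

/-- Walsh–Hadamard transform of a Boolean function. -/
def walsh {n : ℕ} (f : (Fin n → ZMod 2) → ZMod 2) (x : Fin n → ZMod 2) : ℤ :=
  ∑ y : Fin n → ZMod 2, (-1 : ℤ) ^ (f y + dotp x y).val

/-- A Boolean function on `F_2^(2m)` is bent if its Walsh–Hadamard transform has constant
absolute value `2^m`. -/
def IsBent {m : ℕ} (f : (Fin (2 * m) → ZMod 2) → ZMod 2) : Prop :=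
  ∀ x, |walsh f x| = 2 ^ m

/-- The dual of a bent function: `f̂ x = 0` if `W_f x = 2^m`, and `1` otherwise
(for bent `f` the other case is exactly `W_f x = -2^m`). -/
def dual {m : ℕ} (f : (Fin (2 * m) → ZMod 2) → ZMod 2) :
    (Fin (2 * m) → ZMod 2) → ZMod 2 :=
  fun x => if walsh f x = 2 ^ m then 0 else 1

/-- The weight class of a bent function on `F_2^(2m)`:
`0` if its weight is `2^(2m-1) - 2^(m-1)`, and `1` otherwise. -/
def wc {m : ℕ} (f : (Fin (2 * m) → ZMod 2) → ZMod 2) : ZMod 2 :=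
  if wt f = 2 ^ (2 * m - 1) - 2 ^ (m - 1) then 0 else 1

/-- The Cayley graph of a Boolean function: distinct `x`, `y` are adjacent iff `f (x+y) = 1`. -/
def cayley {n : ℕ} (f : (Fin n → ZMod 2) → ZMod 2) : SimpleGraph (Fin n → ZMod 2) where
  Adj x y := x ≠ y ∧ f (x + y) = 1
  symm := ⟨fun x y h => ⟨h.1.symm, by rw [add_comm]; exact h.2⟩⟩
  loopless := ⟨fun x h => h.1 rfl⟩

instance cayleyAdjDecidable {n : ℕ} (f : (Fin n → ZMod 2) → ZMod 2) :
    DecidableRel (cayley f).Adj :=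
  fun x y => inferInstanceAs (Decidable (x ≠ y ∧ f (x + y) = 1))

/-- The standard quadratic bent function `q x = ∑_{k<m} x_k x_{m+k}` on `F_2^(2m)`. -/
def quadq {m : ℕ} (x : Fin (2 * m) → ZMod 2) : ZMod 2 :=
  ∑ k : Fin m, x ⟨k.1, by have := k.isLt; omega⟩ * x ⟨m + k.1, by have := k.isLt; omega⟩

namespace QCayAux

variable {m : ℕ}

/-- The polarization bilinear form of `quadq`. -/
def Bf (x y : Fin (2 * m) → ZMod 2) : ZMod 2 :=
  ∑ k : Fin m, (x ⟨k.1, by have := k.isLt; omega⟩ * y ⟨m + k.1, by have := k.isLt; omega⟩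
    + x ⟨m + k.1, by have := k.isLt; omega⟩ * y ⟨k.1, by have := k.isLt; omega⟩)

lemma quadq_add (x y : Fin (2*m) → ZMod 2) :
    quadq (x + y) = quadq x + quadq y + Bf x y := by
  unfold quadq Bf
  rw [← Finset.sum_add_distrib, ← Finset.sum_add_distrib]
  exact Finset.sum_congr rfl fun k _ => by simp only [Pi.add_apply]; ring

lemma Bf_add_left (x y d : Fin (2*m) → ZMod 2) :
    Bf (x + y) d = Bf x d + Bf y d := by
  unfold Bf
  rw [← Finset.sum_add_distrib]
  exact Finset.sum_congr rfl fun k _ => by simp only [Pi.add_apply]; ring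

lemma Bf_add_right (x y d : Fin (2*m) → ZMod 2) :
    Bf d (x + y) = Bf d x + Bf d y := by
  unfold Bf
  rw [← Finset.sum_add_distrib]
  exact Finset.sum_congr rfl fun k _ => by simp only [Pi.add_apply]; ring

lemma Bf_smul_right (e : ZMod 2) (x d : Fin (2*m) → ZMod 2) :
    Bf x (e • d) = e * Bf x d := by
  unfold Bf
  rw [Finset.mul_sum]
  exact Finset.sum_congr rfl fun k _ => by simp only [Pi.smul_apply, smul_eq_mul]; ring

lemma Bf_smul_left (e : ZMod 2) (x d : Fin (2*m) → ZMod 2) :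
    Bf (e • x) d = e * Bf x d := by
  unfold Bf
  rw [Finset.mul_sum]
  exact Finset.sum_congr rfl fun k _ => by simp only [Pi.smul_apply, smul_eq_mul]; ring

lemma quadq_smul (e : ZMod 2) (d : Fin (2*m) → ZMod 2) :
    quadq (e • d) = e * quadq d := by
  have he : e * e = e := by revert e; decide
  unfold quadq
  rw [Finset.mul_sum]
  refine Finset.sum_congr rfl fun k _ => ?_
  simp only [Pi.smul_apply, smul_eq_mul]
  ring_nf
  rw [sq, he]

lemma pi_add_self (u : Fin (2*m) → ZMod 2) : u + u = 0 := by
  funext i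
  show u i + u i = 0
  revert i
  intro i
  have : ∀ a : ZMod 2, a + a = 0 := by decide
  exact this (u i)

lemma sum_split (g : Fin (2*m) → ZMod 2) :
    ∑ i, g i = ∑ k : Fin m,
      (g ⟨k.1, by have := k.isLt; omega⟩ + g ⟨m + k.1, by have := k.isLt; omega⟩) := by
  rw [Finset.sum_add_distrib]
  rw [show (∑ i, g i) = ∑ i : Fin (m+m), g (finCongr (by omega : m+m = 2*m) i) from
    (Fintype.sum_equiv (finCongr (by omega : m+m = 2*m)) (fun i => g (finCongr (by omega) i)) g
      (fun i => rfl)).symm]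
  rw [Fin.sum_univ_add]
  congr 1

/-- The "swap the two halves" linear map. -/
def Lsw (c : Fin (2*m) → ZMod 2) : Fin (2*m) → ZMod 2 :=
  fun i => if h : (i : ℕ) < m then c ⟨m + i, by omega⟩
    else c ⟨(i : ℕ) - m, by have := i.isLt; omega⟩

lemma Bf_Lsw (x c : Fin (2*m) → ZMod 2) : Bf x (Lsw c) = dotp c x := by
  unfold Bf dotp
  rw [sum_split (fun i => c i * x i)]
  refine Finset.sum_congr rfl fun k _ => ?_
  have hk := k.isLt
  have h1 : Lsw c ⟨m + k.1, by omega⟩ = c ⟨k.1, by omega⟩ := by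
    unfold Lsw
    rw [dif_neg (show ¬((⟨m + k.1, by omega⟩ : Fin (2*m)) : ℕ) < m by simp)]
    congr 1
    ext
    simp
  have h2 : Lsw c ⟨k.1, by omega⟩ = c ⟨m + k.1, by omega⟩ := by
    unfold Lsw
    rw [dif_pos (show ((⟨k.1, by omega⟩ : Fin (2*m)) : ℕ) < m by simpa using hk)]
  rw [h1, h2]
  ring

/-- Normal form: every member of the extended translation class of `quadq` is
`x ↦ quadq (x + s) + quadq s` for `s = b + Lsw c`. -/
lemma normal_form (b c : Fin (2*m) → ZMod 2) :
    (fun x => quadq (x + b) + dotp c x + quadq b) =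
      (fun x => quadq (x + (b + Lsw c)) + quadq (b + Lsw c)) := by
  funext x
  rw [quadq_add x b, quadq_add x (b + Lsw c), Bf_add_right, Bf_Lsw]
  have : ∀ qx qb B D qs : ZMod 2,
      qx + qb + B + D + qb = qx + qs + (B + D) + qs := by decide
  exact this (quadq x) (quadq b) (Bf x b) (dotp c x) (quadq (b + Lsw c))

section Counting

lemma neg_one_pow_sum {α : Type*} (s : Finset α) (a : α → ZMod 2) :
    (-1:ℤ)^((∑ k ∈ s, a k).val) = ∏ k ∈ s, (-1:ℤ)^((a k).val) := by
  induction s using Finset.cons_induction with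
  | empty => simp
  | cons i s hi ih =>
    rw [Finset.sum_cons, Finset.prod_cons, ← ih]
    have : ∀ u v : ZMod 2, (-1:ℤ)^((u+v).val) = (-1:ℤ)^(u.val) * (-1:ℤ)^(v.val) := by decide
    exact this _ _

def pairE : (Fin (2*m) → ZMod 2) ≃ (Fin m → ZMod 2 × ZMod 2) where
  toFun x := fun k => (x ⟨k.1, by have := k.isLt; omega⟩, x ⟨m + k.1, by have := k.isLt; omega⟩)
  invFun p := fun i => if h : (i:ℕ) < m then (p ⟨i, h⟩).1
    else (p ⟨(i:ℕ) - m, by have := i.isLt; omega⟩).2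
  left_inv x := by
    funext i
    by_cases h : (i:ℕ) < m
    · simp only [dif_pos h]
    · simp only [dif_neg h]
      congr 1
      ext
      simp
      have := i.isLt; omega
  right_inv p := by
    funext k
    have hk := k.isLt
    show (if h : ((⟨(k:ℕ), by omega⟩ : Fin (2*m)) :ℕ) < m then _ else _,
      if h : ((⟨m + (k:ℕ), by omega⟩ : Fin (2*m)) :ℕ) < m then _ else _) = p k
    rw [dif_pos (by simpa using hk), dif_neg (by simp)]
    have h1 : (⟨(k:ℕ), by simpa using hk⟩ : Fin m) = k := by ext; simp
    have h2 : (⟨m + (k:ℕ) - m, by omega⟩ : Fin m) = k := by ext; simp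
    rw [h1, h2]

lemma char_sum : (∑ x : Fin (2*m) → ZMod 2, (-1:ℤ)^((quadq x).val)) = 2^m := by
  have step1 : ∀ x : Fin (2*m) → ZMod 2, (-1:ℤ)^((quadq x).val) =
      ∏ k : Fin m, (-1:ℤ)^(((pairE x k).1 * (pairE x k).2).val) := by
    intro x
    rw [quadq, neg_one_pow_sum]
    rfl
  calc (∑ x : Fin (2*m) → ZMod 2, (-1:ℤ)^((quadq x).val))
      = ∑ p : Fin m → ZMod 2 × ZMod 2, ∏ k, (-1:ℤ)^(((p k).1 * (p k).2).val) := by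
        refine Fintype.sum_equiv pairE _ _ fun x => ?_
        rw [step1]
    _ = ∏ k : Fin m, ∑ j : ZMod 2 × ZMod 2, (-1:ℤ)^((j.1*j.2).val) :=
        (Fintype.prod_sum (fun _ (j : ZMod 2 × ZMod 2) => (-1:ℤ)^((j.1*j.2).val))).symm
    _ = 2^m := by
        have : (∑ j : ZMod 2 × ZMod 2, (-1:ℤ)^((j.1*j.2).val)) = 2 := by decide
        rw [this]
        simp

lemma count_ne :
    (univ.filter fun x : Fin (2*m) → ZMod 2 => quadq x = 0).card ≠
      (univ.filter fun x : Fin (2*m) → ZMod 2 => quadq x = 1).card := by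
  intro hEq
  have hone : ∀ a : ZMod 2, ¬ a = 0 → a = 1 := by decide
  have hsum : (∑ x : Fin (2*m) → ZMod 2, (-1:ℤ)^((quadq x).val)) =
      ((univ.filter fun x : Fin (2*m) → ZMod 2 => quadq x = 0).card : ℤ) -
        ((univ.filter fun x : Fin (2*m) → ZMod 2 => quadq x = 1).card : ℤ) := by
    rw [← Finset.sum_filter_add_sum_filter_not univ (fun x => quadq x = 0)]
    have e1 : (∑ x ∈ univ.filter (fun x : Fin (2*m) → ZMod 2 => quadq x = 0),
        (-1:ℤ)^((quadq x).val)) =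
        ((univ.filter fun x : Fin (2*m) → ZMod 2 => quadq x = 0).card : ℤ) := by
      rw [show (∑ x ∈ univ.filter (fun x : Fin (2*m) → ZMod 2 => quadq x = 0),
          (-1:ℤ)^((quadq x).val)) =
          ∑ _x ∈ univ.filter (fun x : Fin (2*m) → ZMod 2 => quadq x = 0), (1:ℤ) from
        Finset.sum_congr rfl fun x hx => by
          rw [(Finset.mem_filter.mp hx).2, ZMod.val_zero, pow_zero]]
      simp
    have e2 : (∑ x ∈ univ.filter (fun x : Fin (2*m) → ZMod 2 => ¬ quadq x = 0),
        (-1:ℤ)^((quadq x).val)) =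
        -((univ.filter fun x : Fin (2*m) → ZMod 2 => quadq x = 1).card : ℤ) := by
      rw [show (univ.filter fun x : Fin (2*m) → ZMod 2 => ¬ quadq x = 0) =
          (univ.filter fun x : Fin (2*m) → ZMod 2 => quadq x = 1) from
        Finset.filter_congr fun x _ => ⟨hone _, fun h => by rw [h]; decide⟩]
      rw [show (∑ x ∈ univ.filter (fun x : Fin (2*m) → ZMod 2 => quadq x = 1),
          (-1:ℤ)^((quadq x).val)) =
          ∑ _x ∈ univ.filter (fun x : Fin (2*m) → ZMod 2 => quadq x = 1), (-1:ℤ) from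
        Finset.sum_congr rfl fun x hx => by
          rw [(Finset.mem_filter.mp hx).2, show ((1:ZMod 2)).val = 1 from rfl, pow_one]]
      rw [Finset.sum_const]
      simp
    rw [e1, e2]
    ring
  rw [char_sum, hEq] at hsum
  have h2 : (0:ℤ) < 2^m := by positivity
  omega

end Counting

/-- The count of points where a translate-form function takes value 1. -/
lemma wt_translate (s : Fin (2*m) → ZMod 2) :
    wt (fun x => quadq (x + s) + quadq s) =
      (univ.filter fun y : Fin (2*m) → ZMod 2 => quadq y = 1 + quadq s).card := by
  unfold wt
  refine Finset.card_bij' (fun x _ => x + s) (fun y _ => y + s) ?_ ?_ ?_ ?_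
  · intro x hx
    simp only [Finset.mem_filter, Finset.mem_univ, true_and] at hx ⊢
    have : ∀ a e : ZMod 2, a + e = 1 → a = 1 + e := by decide
    exact this _ _ hx
  · intro y hy
    simp only [Finset.mem_filter, Finset.mem_univ, true_and] at hy ⊢
    rw [add_assoc, pi_add_self, add_zero, hy]
    have : ∀ e : ZMod 2, 1 + e + e = 1 := by decide
    exact this _
  · intro x _
    show x + s + s = x
    rw [add_assoc, pi_add_self, add_zero]
  · intro y _
    show y + s + s = y
    rw [add_assoc, pi_add_self, add_zero]

/-- In the Cayley graph of `f` with `f 0 = 0`, every vertex has exactly `wt f` neighbours. -/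
lemma card_adj (f : (Fin (2*m) → ZMod 2) → ZMod 2) (hf0 : f 0 = 0)
    (v : Fin (2*m) → ZMod 2) :
    (univ.filter fun y => (cayley f).Adj v y).card = wt f := by
  unfold wt
  refine Finset.card_bij' (fun y _ => v + y) (fun z _ => v + z) ?_ ?_ ?_ ?_
  · intro y hy
    simp only [Finset.mem_filter, Finset.mem_univ, true_and] at hy ⊢
    exact hy.2
  · intro z hz
    simp only [Finset.mem_filter, Finset.mem_univ, true_and] at hz ⊢
    constructor
    · intro hvz
      have : v + v = v + (v + z) := by rw [← hvz]
      rw [pi_add_self, ← add_assoc, pi_add_self, zero_add] at this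
      rw [← this] at hz
      rw [hf0] at hz
      exact absurd hz (by decide)
    · rw [← add_assoc, pi_add_self, zero_add]
      exact hz
  · intro y _
    show v + (v + y) = y
    rw [← add_assoc, pi_add_self, zero_add]
  · intro z _
    show v + (v + z) = z
    rw [← add_assoc, pi_add_self, zero_add]

/-- A graph isomorphism forces equal weights. -/
lemma iso_imp_wt_eq (f g : (Fin (2*m) → ZMod 2) → ZMod 2) (hf0 : f 0 = 0) (hg0 : g 0 = 0)
    (φ : cayley f ≃g cayley g) : wt f = wt g := by
  rw [← card_adj f hf0 0, ← card_adj g hg0 (φ 0)]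
  refine Finset.card_bij' (fun y _ => φ y) (fun w _ => φ.symm w) ?_ ?_ ?_ ?_
  · intro y hy
    simp only [Finset.mem_filter, Finset.mem_univ, true_and] at hy ⊢
    exact φ.map_rel_iff.mpr hy
  · intro w hw
    simp only [Finset.mem_filter, Finset.mem_univ, true_and] at hw ⊢
    apply φ.map_rel_iff.mp
    rwa [φ.apply_symm_apply]
  · intro y _; exact φ.symm_apply_apply y
  · intro w _; exact φ.apply_symm_apply w

lemma Bf_self (d : Fin (2*m) → ZMod 2) : Bf d d = 0 := by
  unfold Bf
  refine Finset.sum_eq_zero fun k _ => ?_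
  have : ∀ a b : ZMod 2, a * b + b * a = 0 := by decide
  exact this _ _

/-- The affine symplectic-transvection-style involution used to build the isomorphism. -/
def tv (d : Fin (2*m) → ZMod 2) : (Fin (2*m) → ZMod 2) ≃ (Fin (2*m) → ZMod 2) where
  toFun x := x + Bf x d • d
  invFun x := x + Bf x d • d
  left_inv x := by
    show x + Bf x d • d + Bf (x + Bf x d • d) d • d = x
    rw [Bf_add_left, Bf_smul_left, Bf_self, mul_zero, add_zero, add_assoc, pi_add_self, add_zero]
  right_inv x := by
    show x + Bf x d • d + Bf (x + Bf x d • d) d • d = x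
    rw [Bf_add_left, Bf_smul_left, Bf_self, mul_zero, add_zero, add_assoc, pi_add_self, add_zero]

lemma tv_add (d x y : Fin (2*m) → ZMod 2) : tv d (x + y) = tv d x + tv d y := by
  show (x + y) + Bf (x+y) d • d = (x + Bf x d • d) + (y + Bf y d • d)
  rw [Bf_add_left, add_smul]
  abel

/-- Key isometry identity. -/
lemma key (s s' : Fin (2*m) → ZMod 2) (h : quadq s = quadq s') (z : Fin (2*m) → ZMod 2) :
    quadq (tv (s + s') z + s') = quadq (z + s) := by
  set d := s + s' with hd
  set cc := Bf z d with hcc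
  have hsd : s + d = s' := by
    rw [hd, ← add_assoc, pi_add_self, zero_add]
  have hBsd : Bf s d = quadq d := by
    have hq : quadq s' = quadq s + quadq d + Bf s d := by
      rw [← hsd] at h ⊢
      rw [quadq_add]
    rw [h] at hq
    have : ∀ a b c : ZMod 2, a = a + b + c → c = b := by decide
    exact this _ _ _ hq
  have harg : tv d z + s' = (z + s) + (cc + 1) • d := by
    show z + cc • d + s' = (z + s) + (cc + 1) • d
    rw [add_smul, one_smul, ← hsd]
    abel
  have hBzs : Bf (z + s) d = cc + quadq d := by
    rw [Bf_add_left, hBsd, hcc]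
  calc quadq (tv d z + s') = quadq ((z + s) + (cc + 1) • d) := by rw [harg]
    _ = quadq (z + s) + ((cc+1) * quadq d + (cc+1) * (cc + quadq d)) := by
        rw [quadq_add, quadq_smul, Bf_smul_right, hBzs]; ring
    _ = quadq (z + s) := by
        have : ∀ a b : ZMod 2, (a+1) * b + (a+1) * (a + b) = 0 := by decide
        rw [this]; exact add_zero _

/-- If the two translate parameters have equal `quadq` value, the Cayley graphs
of the corresponding translate-form functions are isomorphic. -/
def isoOfEq (s s' : Fin (2*m) → ZMod 2) (h : quadq s = quadq s') :
    cayley (fun x => quadq (x + s) + quadq s) ≃g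
      cayley (fun x => quadq (x + s') + quadq s') where
  toEquiv := tv (s + s')
  map_rel_iff' := by
    intro x y
    have hz : ∀ z : Fin (2*m) → ZMod 2,
        quadq (tv (s+s') z + s') + quadq s' = quadq (z + s) + quadq s := by
      intro z
      rw [key s s' h z, h]
    show (tv (s+s') x ≠ tv (s+s') y ∧
        quadq ((tv (s+s') x + tv (s+s') y) + s') + quadq s' = 1) ↔
      (x ≠ y ∧ quadq ((x + y) + s) + quadq s = 1)
    rw [← tv_add]
    exact and_congr (tv (s+s')).injective.ne_iff (by rw [hz (x + y)])

end QCayAux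

open QCayAux

theorem quadratic_two_cayley_classes {m : ℕ} (hm : 1 ≤ m)
    (b c b' c' : Fin (2 * m) → ZMod 2) :
    (fun x => quadq (x + b) + dotp c x + quadq b) 0 = 0 ∧
    (fun x => quadq (x + b') + dotp c' x + quadq b') 0 = 0 ∧
    (Nonempty
        (cayley (fun x => quadq (x + b) + dotp c x + quadq b) ≃g
         cayley (fun x => quadq (x + b') + dotp c' x + quadq b')) ↔
      wt (fun x => quadq (x + b) + dotp c x + quadq b) =
        wt (fun x => quadq (x + b') + dotp c' x + quadq b')) := by
  have hzero : ∀ (b₀ c₀ : Fin (2*m) → ZMod 2),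
      (fun x => quadq (x + b₀) + dotp c₀ x + quadq b₀) 0 = 0 := by
    intro b₀ c₀
    show quadq (0 + b₀) + dotp c₀ 0 + quadq b₀ = 0
    have hd : dotp c₀ (0 : Fin (2*m) → ZMod 2) = 0 := by
      unfold dotp
      simp
    rw [zero_add, hd]
    have : ∀ a : ZMod 2, a + 0 + a = 0 := by decide
    exact this _
  have hz0 : ∀ s₀ : Fin (2*m) → ZMod 2,
      (fun x => quadq (x + s₀) + quadq s₀) 0 = 0 := by
    intro s₀
    show quadq (0 + s₀) + quadq s₀ = 0
    rw [zero_add]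
    have : ∀ a : ZMod 2, a + a = 0 := by decide
    exact this _
  refine ⟨hzero b c, hzero b' c', ?_⟩
  have hF := normal_form b c
  have hG := normal_form b' c'
  rw [hF, hG]
  set s := b + Lsw c with hs
  set s' := b' + Lsw c' with hs'
  constructor
  · rintro ⟨φ⟩
    exact iso_imp_wt_eq _ _ (hz0 s) (hz0 s') φ
  · intro hw
    have hwF : wt (fun x => quadq (x + s) + quadq s) =
        (univ.filter fun y : Fin (2*m) → ZMod 2 => quadq y = 1 + quadq s).card :=
      wt_translate s
    have hwG : wt (fun x => quadq (x + s') + quadq s') =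
        (univ.filter fun y : Fin (2*m) → ZMod 2 => quadq y = 1 + quadq s').card :=
      wt_translate s'
    have hq : quadq s = quadq s' := by
      by_contra hne
      have hcases : (1 + quadq s = 0 ∧ 1 + quadq s' = 1) ∨
          (1 + quadq s = 1 ∧ 1 + quadq s' = 0) := by
        revert hne
        have : ∀ a b : ZMod 2, a ≠ b → (1 + a = 0 ∧ 1 + b = 1) ∨ (1 + a = 1 ∧ 1 + b = 0) := by
          decide
        exact this _ _
      rw [hwF, hwG] at hw
      rcases hcases with ⟨h1, h2⟩ | ⟨h1, h2⟩
      · rw [h1, h2] at hw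
        exact count_ne hw
      · rw [h1, h2] at hw
        exact count_ne hw.symm
    exact ⟨isoOfEq s s' hq⟩
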